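/- The equation x² + 2x·sin x + 6(cos x − 1) = 0 has exactly one root in the open interval (0, 2π). -/

import Mathlib

open Real Set

private noncomputable def fth (x : ℝ) : ℝ :=
  x ^ 2 + 2 * x * Real.sin x + 6 * (Real.cos x - 1)

private lemma fth_deriv (x : ℝ) :
    HasDerivAt fth (2 * x * (1 + Real.cos x) - 4 * Real.sin x) x := by
  have h1 : HasDerivAt (fun x : ℝ => x ^ 2) (2 * x) x := by
    simpa using hasDerivAt_pow 2 x
  have h2 : HasDerivAt (fun x : ℝ => 2 * x * Real.sin x)
      (2 * Real.sin x + 2 * x * Real.cos x) x := by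
    have := (((hasDerivAt_id x).const_mul 2).mul (Real.hasDerivAt_sin x))
    exact this.congr_deriv (by simp)
  have h3 : HasDerivAt (fun x : ℝ => 6 * (Real.cos x - 1)) (6 * (-Real.sin x)) x :=
    ((Real.hasDerivAt_cos x).sub_const 1).const_mul 6
  have := (h1.add h2).add h3
  exact this.congr_deriv (by ring)

private lemma fth_cont : Continuous fth := by
  unfold fth; fun_prop

private lemma fth_anti : StrictAntiOn fth (Set.Icc 0 Real.pi) := by
  apply strictAntiOn_of_deriv_neg (convex_Icc _ _) fth_cont.continuousOn
  intro x hx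
  rw [interior_Icc] at hx
  rw [(fth_deriv x).deriv]
  obtain ⟨hx0, hxpi⟩ := hx
  have hc : 0 < Real.cos (x / 2) := by
    apply Real.cos_pos_of_mem_Ioo
    constructor <;> [linarith [Real.pi_pos]; linarith]
  have ht : x / 2 < Real.tan (x / 2) := by
    apply Real.lt_tan <;> linarith
  rw [Real.tan_eq_sin_div_cos] at ht
  have hkey : x * Real.cos (x / 2) < 2 * Real.sin (x / 2) := by
    have := (div_lt_div_iff₀ (by norm_num) hc).mp ht
    linarith
  have hcos : 1 + Real.cos x = 2 * Real.cos (x / 2) ^ 2 := by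
    have h := Real.cos_sq (x / 2)
    rw [show (2:ℝ) * (x / 2) = x by ring] at h
    linarith
  have hsin : Real.sin x = 2 * Real.sin (x / 2) * Real.cos (x / 2) := by
    have h := Real.sin_two_mul (x / 2)
    rw [show (2:ℝ) * (x / 2) = x by ring] at h
    exact h
  rw [hcos, hsin]
  nlinarith [hc, hkey]

private lemma fth_mono : StrictMonoOn fth (Set.Icc Real.pi (2 * Real.pi)) := by
  apply strictMonoOn_of_deriv_pos (convex_Icc _ _) fth_cont.continuousOn
  intro x hx
  rw [interior_Icc] at hx
  rw [(fth_deriv x).deriv]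
  obtain ⟨hx1, hx2⟩ := hx
  have hs : Real.sin x < 0 := by
    have h := Real.sin_pos_of_pos_of_lt_pi (x := x - Real.pi) (by linarith) (by linarith)
    have : Real.sin (x - Real.pi) = -Real.sin x := by
      rw [Real.sin_sub]; simp
    linarith [this ▸ h]
  have hcb : -1 ≤ Real.cos x := Real.neg_one_le_cos x
  have hxp : 0 < x := lt_trans Real.pi_pos hx1
  nlinarith

theorem unique_root_theta3 :
    ∃! x : ℝ, x ∈ Set.Ioo 0 (2 * Real.pi) ∧
      x ^ 2 + 2 * x * Real.sin x + 6 * (Real.cos x - 1) = 0 := by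
  have hpi := Real.pi_pos
  have hpilt : Real.pi < 3.15 := by linarith [Real.pi_lt_d2]
  have hfpi : fth Real.pi < 0 := by
    unfold fth
    rw [Real.sin_pi, Real.cos_pi]
    nlinarith
  have hf2pi : 0 < fth (2 * Real.pi) := by
    unfold fth
    rw [Real.sin_two_pi, Real.cos_two_pi]
    nlinarith
  -- existence
  obtain ⟨c, hc, hfc⟩ := intermediate_value_Ioo (by linarith : Real.pi ≤ 2 * Real.pi)
    fth_cont.continuousOn (Set.mem_Ioo.mpr ⟨hfpi, hf2pi⟩)
  refine ⟨c, ⟨⟨by linarith [hc.1], hc.2⟩, by simpa [fth] using hfc⟩, ?_⟩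
  rintro y ⟨⟨hy0, hy2⟩, hfy⟩
  have hfy' : fth y = 0 := by simpa [fth] using hfy
  -- y must be > π
  have hygt : Real.pi < y := by
    by_contra h
    push_neg at h
    have : fth y < fth 0 := fth_anti ⟨le_refl 0, by linarith⟩ ⟨le_of_lt hy0, h⟩ hy0
    have hf0 : fth 0 = 0 := by simp [fth]
    rw [hf0, hfy'] at this
    exact lt_irrefl 0 this
  exact fth_mono.injOn ⟨le_of_lt hygt, le_of_lt hy2⟩
    ⟨le_of_lt hc.1, le_of_lt hc.2⟩ (by rw [hfy', hfc])
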